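/- For an [n, n-r, d] binary linear code with weight spectrum A_0, …, A_n, the number S_ρ of weight-ρ erasure patterns correctable by the code satisfies S_ρ ≥ C(n,ρ) − Σ_{w=d}^{ρ} A_w · C(n−w, ρ−w) for all d ≤ ρ ≤ r. -/

import Mathlib

/-- An erasure pattern `s` is correctable by the code with parity check matrix `H` iff
the columns of `H` indexed by `s` are linearly independent, i.e. no nonzero codeword is
supported inside `s`. -/
def Correctable {r n : ℕ} (H : Matrix (Fin r) (Fin n) (ZMod 2)) (s : Finset (Fin n)) :
    Prop :=
  ∀ x : Fin n → ZMod 2, (∀ i, i ∉ s → x i = 0) → Matrix.mulVec H x = 0 → x = 0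

/-- For an `[n, n-r, d]` binary code, the number `S_ρ` of correctable erasure patterns of
weight `ρ` satisfies `S_ρ ≥ C(n,ρ) − ∑_{w=d}^{ρ} A_w C(n−w, ρ−w)` for `d ≤ ρ ≤ r`. -/
theorem stmt_10 {r n d ρ : ℕ} (H : Matrix (Fin r) (Fin n) (ZMod 2))
    (hd1 : ∀ x : Fin n → ZMod 2, Matrix.mulVec H x = 0 → x ≠ 0 → d ≤ hammingNorm x)
    (hd2 : ∃ x : Fin n → ZMod 2, Matrix.mulVec H x = 0 ∧ x ≠ 0 ∧ hammingNorm x = d)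
    (hρ1 : d ≤ ρ) (hρ2 : ρ ≤ r) :
    (Nat.choose n ρ : ℤ) -
      ∑ w ∈ Finset.Icc d ρ,
        (Nat.card {x : Fin n → ZMod 2 //
            Matrix.mulVec H x = 0 ∧ hammingNorm x = w} : ℤ) *
          Nat.choose (n - w) (ρ - w) ≤
    (Nat.card {s : Finset (Fin n) // s.card = ρ ∧ Correctable H s} : ℤ) := by
  classical
  set P : Finset (Finset (Fin n)) := Finset.powersetCard ρ Finset.univ with hPdef
  have hPmem : ∀ s : Finset (Fin n), s ∈ P ↔ s.card = ρ := by
    intro s; simp [hPdef, Finset.mem_powersetCard]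
  set Cs := P.filter (fun s => Correctable H s) with hCsdef
  set Ns := P.filter (fun s => ¬ Correctable H s) with hNsdef
  have hsplit : Cs.card + Ns.card = n.choose ρ := by
    rw [hCsdef, hNsdef, Finset.card_filter_add_card_filter_not]
    simp [hPdef]
  have hsupp : ∀ x : Fin n → ZMod 2,
      hammingNorm x = (Finset.univ.filter fun i => x i ≠ 0).card := by
    intro x
    simp [hammingNorm]
  set X : Finset (Fin n → ZMod 2) :=
    Finset.univ.filter
      (fun x => Matrix.mulVec H x = 0 ∧ x ≠ 0 ∧ hammingNorm x ∈ Finset.Icc d ρ) with hXdef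
  set g : (Fin n → ZMod 2) → Finset (Finset (Fin n)) :=
    fun x => P.filter (fun s => (Finset.univ.filter fun i => x i ≠ 0) ⊆ s) with hgdef
  have hNsub : Ns ⊆ X.biUnion g := by
    intro s hs
    rw [hNsdef, Finset.mem_filter] at hs
    obtain ⟨hsP, hnc⟩ := hs
    rw [Correctable] at hnc
    push_neg at hnc
    obtain ⟨x, hx1, hx2, hx3⟩ := hnc
    have hsubs : (Finset.univ.filter fun i => x i ≠ 0) ⊆ s := by
      intro i hi
      simp only [Finset.mem_filter] at hi
      by_contra h
      exact hi.2 (hx1 i h)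
    have hwle : hammingNorm x ≤ ρ := by
      rw [hsupp]
      calc (Finset.univ.filter fun i => x i ≠ 0).card ≤ s.card :=
            Finset.card_le_card hsubs
        _ = ρ := (hPmem s).mp hsP
    refine Finset.mem_biUnion.mpr ⟨x, ?_, ?_⟩
    · rw [hXdef]
      simp only [Finset.mem_filter, Finset.mem_univ, true_and]
      exact ⟨hx2, hx3, Finset.mem_Icc.mpr ⟨hd1 x hx2 hx3, hwle⟩⟩
    · rw [hgdef]; exact Finset.mem_filter.mpr ⟨hsP, hsubs⟩
  have hgcard : ∀ x ∈ X,
      (g x).card ≤ (n - hammingNorm x).choose (ρ - hammingNorm x) := by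
    intro x hx
    set t := (Finset.univ.filter fun i => x i ≠ 0) with htdef
    have htcard : t.card = hammingNorm x := (hsupp x).symm
    have hle : (g x).card ≤
        (Finset.powersetCard (ρ - hammingNorm x) (Finset.univ \ t)).card := by
      apply Finset.card_le_card_of_injOn (fun s => s \ t)
      · intro s hs
        simp only [Finset.mem_coe, hgdef, Finset.mem_filter] at hs
        obtain ⟨hsP, hts⟩ := hs
        simp only [Finset.mem_coe, Finset.mem_powersetCard]
        constructor
        · exact Finset.sdiff_subset_sdiff (Finset.subset_univ s) le_rfl
        · rw [Finset.card_sdiff_of_subset hts, (hPmem s).mp hsP, htcard]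
      · intro s1 hs1 s2 hs2 h
        simp only [Finset.mem_coe, hgdef, Finset.mem_filter] at hs1 hs2
        have e1 := Finset.sdiff_union_of_subset hs1.2
        have e2 := Finset.sdiff_union_of_subset hs2.2
        simp only at h
        rw [← e1, ← e2, h]
    calc (g x).card ≤ _ := hle
      _ = (Finset.univ \ t).card.choose (ρ - hammingNorm x) :=
          Finset.card_powersetCard _ _
      _ = (n - hammingNorm x).choose (ρ - hammingNorm x) := by
          rw [Finset.card_sdiff_of_subset (Finset.subset_univ t), htcard,
            Finset.card_univ, Fintype.card_fin]
  have hNcard : Ns.card ≤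
      ∑ x ∈ X, (n - hammingNorm x).choose (ρ - hammingNorm x) :=
    le_trans (Finset.card_le_card hNsub)
      (le_trans Finset.card_biUnion_le (Finset.sum_le_sum hgcard))
  have hfib : ∑ x ∈ X, (n - hammingNorm x).choose (ρ - hammingNorm x)
      = ∑ w ∈ Finset.Icc d ρ, ∑ x ∈ X.filter (fun x => hammingNorm x = w),
          (n - hammingNorm x).choose (ρ - hammingNorm x) := by
    refine (Finset.sum_fiberwise_of_maps_to ?_ _).symm
    intro x hx
    rw [hXdef] at hx
    simp only [Finset.mem_filter, Finset.mem_univ, true_and] at hx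
    exact hx.2.2
  have hinner : ∀ w ∈ Finset.Icc d ρ,
      ∑ x ∈ X.filter (fun x => hammingNorm x = w),
          (n - hammingNorm x).choose (ρ - hammingNorm x)
        ≤ (Nat.card {x : Fin n → ZMod 2 //
            Matrix.mulVec H x = 0 ∧ hammingNorm x = w}) * (n - w).choose (ρ - w) := by
    intro w hw
    have : ∑ x ∈ X.filter (fun x => hammingNorm x = w),
        (n - hammingNorm x).choose (ρ - hammingNorm x)
        = (X.filter (fun x => hammingNorm x = w)).card * (n - w).choose (ρ - w) := by
      rw [Finset.sum_congr rfl (fun x hx => ?_), Finset.sum_const, smul_eq_mul]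
      rw [Finset.mem_filter] at hx
      rw [hx.2]
    rw [this]
    apply Nat.mul_le_mul_right
    have hNatcard : Nat.card {x : Fin n → ZMod 2 //
        Matrix.mulVec H x = 0 ∧ hammingNorm x = w}
        = (Finset.univ.filter
            (fun x : Fin n → ZMod 2 =>
              Matrix.mulVec H x = 0 ∧ hammingNorm x = w)).card := by
      rw [Nat.card_eq_fintype_card, Fintype.card_subtype]
    rw [hNatcard]
    apply Finset.card_le_card
    intro x hx
    rw [Finset.mem_filter] at hx ⊢
    rw [hXdef] at hx
    simp only [Finset.mem_filter, Finset.mem_univ, true_and] at hx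
    exact ⟨Finset.mem_univ x, hx.1.1, hx.2⟩
  have key : n.choose ρ ≤ Cs.card + ∑ w ∈ Finset.Icc d ρ,
      (Nat.card {x : Fin n → ZMod 2 //
        Matrix.mulVec H x = 0 ∧ hammingNorm x = w}) * (n - w).choose (ρ - w) := by
    calc n.choose ρ = Cs.card + Ns.card := hsplit.symm
      _ ≤ Cs.card + ∑ w ∈ Finset.Icc d ρ,
          (Nat.card {x : Fin n → ZMod 2 //
            Matrix.mulVec H x = 0 ∧ hammingNorm x = w}) * (n - w).choose (ρ - w) := by
        apply Nat.add_le_add_left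
        calc Ns.card ≤ _ := hNcard
          _ = _ := hfib
          _ ≤ _ := Finset.sum_le_sum hinner
  have hCscard : Nat.card {s : Finset (Fin n) // s.card = ρ ∧ Correctable H s}
      = Cs.card := by
    rw [Nat.card_eq_fintype_card, Fintype.card_subtype]
    congr 1
    ext s
    simp [hCsdef, hPmem s, Finset.mem_filter, and_comm]
  rw [hCscard]
  have key' : (n.choose ρ : ℤ) ≤ Cs.card + ∑ w ∈ Finset.Icc d ρ,
      (Nat.card {x : Fin n → ZMod 2 //
        Matrix.mulVec H x = 0 ∧ hammingNorm x = w} : ℤ) * (n - w).choose (ρ - w) := by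
    exact_mod_cast key
  linarith
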